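/- arXiv:1407.2275 — 3 statements merged into one kernel-verified Lean document; each statement's English description precedes it below -/
import Mathlib

section
/- Let K be a finite simplicial complex and let U = {U_1, U_2} be a cover of K by two subcomplexes that minimizes the blowup factor |K^U|/|K| subject to the balance constraint max(|U_1|,|U_2|) ≤ α|K| for a fixed α ∈ (1/2, 1). Then every maximal simplex of K lies in exactly one of U_1, U_2; that is, {U_1, U_2} restricted to the maximal cells of K is a partition of the maximal cells. -/
open Finset

/-- `K` is an abstract simplicial complex. -/
def IsComplex {V : Type*} [DecidableEq V] (K : Finset (Finset V)) : Prop :=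
  ∀ σ ∈ K, σ.Nonempty ∧ ∀ τ ⊆ σ, τ.Nonempty → τ ∈ K

/-- For a two-set cover, `|K^U| = |K| + 2|U₁ ∩ U₂|`; minimizing the blowup factor
`|K^U|/|K|` is the same as minimizing `|U₁ ∩ U₂|`. -/
def twoBlowupSize {V : Type*} [DecidableEq V]
    (K U₁ U₂ : Finset (Finset V)) : ℕ :=
  K.card + 2 * (U₁ ∩ U₂).card

theorem stmt_1 {V : Type*} [DecidableEq V] (K U₁ U₂ : Finset (Finset V)) (α : ℝ)
    (hα : 1 / 2 < α ∧ α < 1)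
    (hK : IsComplex K)
    (hU₁K : U₁ ⊆ K) (hU₂K : U₂ ⊆ K)
    (hU₁ : IsComplex U₁) (hU₂ : IsComplex U₂)
    (hcover : U₁ ∪ U₂ = K)
    (hbal : ((max U₁.card U₂.card : ℕ) : ℝ) ≤ α * K.card)
    (hopt : ∀ W₁ W₂ : Finset (Finset V), W₁ ⊆ K → W₂ ⊆ K →
      IsComplex W₁ → IsComplex W₂ → W₁ ∪ W₂ = K →
      ((max W₁.card W₂.card : ℕ) : ℝ) ≤ α * K.card →
      twoBlowupSize K U₁ U₂ ≤ twoBlowupSize K W₁ W₂) :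
    ∀ σ ∈ K, (∀ τ ∈ K, σ ⊆ τ → σ = τ) →
      (σ ∈ U₁ ∨ σ ∈ U₂) ∧ ¬(σ ∈ U₁ ∧ σ ∈ U₂) := by
  intro σ hσ hmax
  constructor
  · have : σ ∈ U₁ ∪ U₂ := hcover ▸ hσ
    simpa using this
  · rintro ⟨h1, h2⟩
    have hW1 : IsComplex (U₁.erase σ) := by
      intro τ hτ
      have hτU : τ ∈ U₁ := mem_of_mem_erase hτ
      obtain ⟨hne, hsub⟩ := hU₁ τ hτU
      refine ⟨hne, fun ρ hρ hρne => ?_⟩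
      refine mem_erase.mpr ⟨?_, hsub ρ hρ hρne⟩
      rintro rfl
      exact (ne_of_mem_erase hτ) (hmax τ (hU₁K hτU) hρ).symm
    have hcov : (U₁.erase σ) ∪ U₂ = K := by
      rw [← hcover]
      ext x
      simp only [mem_union, mem_erase]
      constructor
      · rintro (⟨-, h⟩ | h) <;> [exact Or.inl h; exact Or.inr h]
      · rintro (h | h)
        · by_cases hx : x = σ
          · exact Or.inr (hx ▸ h2)
          · exact Or.inl ⟨hx, h⟩
        · exact Or.inr h
    have hbal' : ((max (U₁.erase σ).card U₂.card : ℕ) : ℝ) ≤ α * K.card := by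
      refine le_trans ?_ hbal
      have : (U₁.erase σ).card ≤ U₁.card := card_le_card (erase_subset _ _)
      exact_mod_cast max_le_max this le_rfl
    have hle := hopt (U₁.erase σ) U₂ (fun x hx => hU₁K (mem_of_mem_erase hx)) hU₂K
      hW1 hU₂ hcov hbal'
    have hint : (U₁.erase σ) ∩ U₂ = (U₁ ∩ U₂).erase σ := by
      ext x; simp only [mem_inter, mem_erase]; tauto
    have hσi : σ ∈ U₁ ∩ U₂ := mem_inter.mpr ⟨h1, h2⟩
    have hcard : ((U₁.erase σ) ∩ U₂).card < (U₁ ∩ U₂).card := by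
      rw [hint]
      exact card_erase_lt_of_mem hσi
    have : twoBlowupSize K (U₁.erase σ) U₂ < twoBlowupSize K U₁ U₂ := by
      unfold twoBlowupSize; omega
    omega
end

section
/- Let K be a finite simplicial complex, let P = {P_0, ..., P_{p-1}} be a partition of the vertex set of K, and define the cover U = {U_0, ..., U_p} where for i < p, U_i consists of those simplices all of whose vertices lie in P_i, and U_p is the closure of the set of simplices whose vertices meet at least two parts of P. Then U is a closed cover of K, the sets U_0, ..., U_{p-1} are pairwise disjoint, and the blowup factor satisfies |K^U|/|K| < 3. -/
open Finset

/-- The simplex `σ` meets at least two parts of the partition `P`. -/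
def Crosses {V : Type*} [DecidableEq V] {p : ℕ}
    (P : Fin p → Finset V) (σ : Finset V) : Prop :=
  ∃ j k : Fin p, j ≠ k ∧ (σ ∩ P j).Nonempty ∧ (σ ∩ P k).Nonempty

instance {V : Type*} [DecidableEq V] {p : ℕ} (P : Fin p → Finset V) :
    DecidablePred (Crosses P) := fun σ => by
  unfold Crosses; infer_instance

/-- The partition-based cover `U = {U_0, …, U_p}` of `K` determined by a vertex
partition `P`: for `i < p`, `U_i` consists of the simplices all of whose
vertices lie in `P i`, and `U_p` is the closure of the set `S` of simplices
meeting at least two parts. -/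
def pcover {V : Type*} [DecidableEq V] {p : ℕ}
    (K : Finset (Finset V)) (P : Fin p → Finset V) : Fin (p + 1) → Finset (Finset V) :=
  fun i =>
    if h : (i : ℕ) < p then K.filter (fun σ => σ ⊆ P ⟨i, h⟩)
    else (K.filter (fun σ => Crosses P σ)).biUnion
      (fun σ => σ.powerset.filter (fun τ => τ.Nonempty))

/-- The number of cells of the Mayer–Vietoris blowup complex. -/
def blowupSize {V : Type*} [DecidableEq V] {n : ℕ}
    (K : Finset (Finset V)) (U : Fin n → Finset (Finset V)) : ℕ :=
  ∑ J ∈ (Finset.univ : Finset (Fin n)).powerset.filter (fun J => J.Nonempty),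
    (K.filter (fun σ => ∀ j ∈ J, σ ∈ U j)).card

section aux
variable {V : Type*} [DecidableEq V] {p : ℕ} (K : Finset (Finset V)) (P : Fin p → Finset V)

lemma mem_pcover_lt {i : Fin (p+1)} (h : (i:ℕ) < p) (σ : Finset V) :
    σ ∈ pcover K P i ↔ σ ∈ K ∧ σ ⊆ P ⟨i, h⟩ := by
  simp [pcover, dif_pos h]

lemma mem_pcover_last (σ : Finset V) :
    σ ∈ pcover K P (Fin.last p) ↔ ∃ ρ, (ρ ∈ K ∧ Crosses P ρ) ∧ σ ⊆ ρ ∧ σ.Nonempty := by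
  simp [pcover, mem_biUnion]

lemma notCrosses_of_subset (hPdisj : ∀ i j : Fin p, i ≠ j → Disjoint (P i) (P j))
    {σ : Finset V} {i0 : Fin p} (h : σ ⊆ P i0) : ¬ Crosses P σ := by
  rintro ⟨j, k, hjk, ⟨v, hv⟩, ⟨w, hw⟩⟩
  rw [mem_inter] at hv hw
  have hj : j = i0 := by
    by_contra hne
    have := (hPdisj j i0 hne).le_bot (mem_inter.mpr ⟨hv.2, h hv.1⟩)
    simp at this
  have hk : k = i0 := by
    by_contra hne
    have := (hPdisj k i0 hne).le_bot (mem_inter.mpr ⟨hw.2, h hw.1⟩)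
    simp at this
  exact hjk (hj.trans hk.symm)

end aux

theorem stmt_2 {V : Type*} [DecidableEq V] {p : ℕ}
    (K : Finset (Finset V)) (P : Fin p → Finset V)
    (hK : IsComplex K) (hKne : K.Nonempty) (hp : 2 ≤ p)
    (hPdisj : ∀ i j : Fin p, i ≠ j → Disjoint (P i) (P j))
    (hPcover : ∀ v : V, (∃ i, v ∈ P i) ↔ ∃ σ ∈ K, v ∈ σ) :
    (∀ i, pcover K P i ⊆ K) ∧
    (∀ i, IsComplex (pcover K P i)) ∧
    (∀ σ ∈ K, ∃ i, σ ∈ pcover K P i) ∧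
    (∀ i j : Fin (p + 1), i ≠ j → (i : ℕ) < p → (j : ℕ) < p →
      pcover K P i ∩ pcover K P j = ∅) ∧
    blowupSize K (pcover K P) < 3 * K.card := by
  -- subset
  have hsub : ∀ i, pcover K P i ⊆ K := by
    intro i σ hσ
    by_cases h : (i:ℕ) < p
    · exact ((mem_pcover_lt K P h σ).1 hσ).1
    · have hi : i = Fin.last p := by
        apply Fin.ext; have := i.isLt; simp [Fin.last]; omega
      rw [hi, mem_pcover_last] at hσ
      obtain ⟨ρ, ⟨hρK, _⟩, hsub, hne⟩ := hσ
      exact ((hK ρ hρK).2 σ hsub hne)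
  refine ⟨hsub, ?_, ?_, ?_, ?_⟩
  -- complexes
  · intro i σ hσ
    by_cases h : (i:ℕ) < p
    · rw [mem_pcover_lt K P h] at hσ
      refine ⟨(hK σ hσ.1).1, fun τ hτ hτne => ?_⟩
      rw [mem_pcover_lt K P h]
      exact ⟨(hK σ hσ.1).2 τ hτ hτne, hτ.trans hσ.2⟩
    · have hi : i = Fin.last p := by
        apply Fin.ext; have := i.isLt; simp [Fin.last]; omega
      subst hi
      rw [mem_pcover_last] at hσ
      obtain ⟨ρ, hρ, hsρ, hne⟩ := hσ
      refine ⟨hne, fun τ hτ hτne => ?_⟩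
      rw [mem_pcover_last]
      exact ⟨ρ, hρ, hτ.trans hsρ, hτne⟩
  -- cover
  · intro σ hσ
    by_cases hc : Crosses P σ
    · exact ⟨Fin.last p, (mem_pcover_last K P σ).2 ⟨σ, ⟨hσ, hc⟩, subset_rfl, (hK σ hσ).1⟩⟩
    · obtain ⟨v, hv⟩ := (hK σ hσ).1
      obtain ⟨i, hvi⟩ := (hPcover v).2 ⟨σ, hσ, hv⟩
      refine ⟨i.castSucc, ?_⟩
      have hlt : ((i.castSucc : Fin (p+1)) : ℕ) < p := i.isLt
      rw [mem_pcover_lt K P hlt]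
      have hPe : P ⟨((i.castSucc : Fin (p+1)) : ℕ), hlt⟩ = P i := by
        congr 1
      refine ⟨hσ, ?_⟩
      rw [hPe]
      intro w hw
      obtain ⟨j, hwj⟩ := (hPcover w).2 ⟨σ, hσ, hw⟩
      rcases eq_or_ne j i with rfl | hne
      · exact hwj
      · exact absurd ⟨j, i, hne, ⟨w, mem_inter.mpr ⟨hw, hwj⟩⟩, ⟨v, mem_inter.mpr ⟨hv, hvi⟩⟩⟩ hc
  -- disjointness
  · intro i j hij hi hj
    rw [eq_empty_iff_forall_notMem]
    intro σ hσ
    rw [mem_inter, mem_pcover_lt K P hi, mem_pcover_lt K P hj] at hσ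
    have hne : (⟨(i:ℕ), hi⟩ : Fin p) ≠ ⟨(j:ℕ), hj⟩ := by
      intro h; apply hij; apply Fin.ext
      have := congrArg Fin.val h; simpa using this
    obtain ⟨v, hv⟩ := (hK σ hσ.1.1).1
    have := (hPdisj _ _ hne).le_bot (mem_inter.mpr ⟨hσ.1.2 hv, hσ.2.2 hv⟩)
    simp at this
  -- blowup
  · classical
    set f : Finset (Fin (p+1)) → ℕ :=
      fun J => (K.filter (fun σ => ∀ j ∈ J, σ ∈ pcover K P j)).card with hf
    -- helper: two distinct "small" covers can't share a simplex
    have hpairF : ∀ σ ∈ K, ∀ a b : Fin (p+1), a ≠ b → ∀ (ha : (a:ℕ) < p) (hb : (b:ℕ) < p),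
        σ ∈ pcover K P a → σ ∈ pcover K P b → False := by
      intro σ hσ a b hab ha hb hA hB
      rw [mem_pcover_lt K P ha] at hA
      rw [mem_pcover_lt K P hb] at hB
      have hne : (⟨(a:ℕ), ha⟩ : Fin p) ≠ ⟨(b:ℕ), hb⟩ := by
        intro h; apply hab; apply Fin.ext
        have := congrArg Fin.val h; simpa using this
      obtain ⟨v, hv⟩ := (hK σ hσ).1
      have := (hPdisj _ _ hne).le_bot (mem_inter.mpr ⟨hA.2 hv, hB.2 hv⟩)
      simp at this
    have hvanish : ∀ J : Finset (Fin (p+1)),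
        (∃ a ∈ J, ∃ b ∈ J, a ≠ b ∧ a ≠ Fin.last p ∧ b ≠ Fin.last p) → f J = 0 := by
      rintro J ⟨a, haJ, b, hbJ, hab, han, hbn⟩
      rw [hf]
      rw [card_eq_zero, filter_eq_empty_iff]
      intro σ hσ hall
      have ha : (a:ℕ) < p := by
        have h1 := a.isLt
        have h2 : (a:ℕ) ≠ p := fun h => han (Fin.ext (by simpa [Fin.last] using h))
        omega
      have hb : (b:ℕ) < p := by
        have h1 := b.isLt
        have h2 : (b:ℕ) ≠ p := fun h => hbn (Fin.ext (by simpa [Fin.last] using h))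
        omega
      exact hpairF σ hσ a b hab ha hb (hall a haJ) (hall b hbJ)
    set T : Finset (Finset (Fin (p+1))) :=
      (Finset.univ : Finset (Fin (p+1))).image (fun i => ({i} : Finset (Fin (p+1)))) ∪
      (Finset.univ : Finset (Fin p)).image
        (fun i => ({i.castSucc, Fin.last p} : Finset (Fin (p+1)))) with hT
    have hTsub : T ⊆ (Finset.univ : Finset (Fin (p+1))).powerset.filter (fun J => J.Nonempty) := by
      intro J hJ
      rw [hT, mem_union] at hJ
      rcases hJ with h | h <;>
      · simp only [mem_image, mem_univ, true_and] at h
        obtain ⟨i, rfl⟩ := h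
        simp [mem_filter, mem_powerset]
    have hzero : ∀ J ∈ (Finset.univ : Finset (Fin (p+1))).powerset.filter (fun J => J.Nonempty),
        J ∉ T → f J = 0 := by
      intro J hJ hJT
      have hJne : J.Nonempty := (mem_filter.mp hJ).2
      set E := J.erase (Fin.last p) with hE
      by_cases h2 : 2 ≤ E.card
      · obtain ⟨a, haE, b, hbE, hab⟩ := Finset.one_lt_card.mp h2
        exact hvanish J ⟨a, (mem_erase.mp haE).2, b, (mem_erase.mp hbE).2, hab,
          (mem_erase.mp haE).1, (mem_erase.mp hbE).1⟩
      · exfalso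
        interval_cases hEc : E.card
        · -- E empty: J = {last}
          have hEe : E = ∅ := card_eq_zero.mp hEc
          apply hJT
          have hJeq : J = {Fin.last p} := by
            apply Finset.ext
            intro x
            simp only [mem_singleton]
            constructor
            · intro hx
              by_contra hne
              have : x ∈ E := mem_erase.mpr ⟨hne, hx⟩
              rw [hEe] at this; simp at this
            · rintro rfl
              obtain ⟨y, hy⟩ := hJne
              rcases eq_or_ne y (Fin.last p) with rfl | hne
              · exact hy
              · exfalso
                have : y ∈ E := mem_erase.mpr ⟨hne, hy⟩
                rw [hEe] at this; simp at this
          rw [hT, hJeq, mem_union]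
          left
          exact mem_image.mpr ⟨Fin.last p, mem_univ _, rfl⟩
        · -- E = {a}
          obtain ⟨a, hEa⟩ := card_eq_one.mp hEc
          have haJ : a ∈ J ∧ a ≠ Fin.last p := by
            have : a ∈ E := by rw [hEa]; simp
            exact ⟨(mem_erase.mp this).2, (mem_erase.mp this).1⟩
          have hJmem : ∀ x ∈ J, x = a ∨ x = Fin.last p := by
            intro x hx
            rcases eq_or_ne x (Fin.last p) with h | h
            · right; exact h
            · left
              have : x ∈ E := mem_erase.mpr ⟨h, hx⟩
              rw [hEa] at this; simpa using this
          apply hJT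
          rw [hT, mem_union]
          by_cases hlast : Fin.last p ∈ J
          · right
            have halt : (a:ℕ) < p := by
              have h1 := a.isLt
              have h2 : (a:ℕ) ≠ p := fun h => haJ.2 (Fin.ext (by simpa [Fin.last] using h))
              omega
            refine mem_image.mpr ⟨⟨(a:ℕ), halt⟩, mem_univ _, ?_⟩
            have hcs : (⟨(a:ℕ), halt⟩ : Fin p).castSucc = a := by
              apply Fin.ext; simp
            rw [hcs]
            apply Finset.ext
            intro x
            simp only [mem_insert, mem_singleton]
            constructor
            · rintro (rfl | rfl)
              exacts [haJ.1, hlast]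
            · intro hx; exact hJmem x hx
          · left
            refine mem_image.mpr ⟨a, mem_univ _, ?_⟩
            apply Finset.ext
            intro x
            simp only [mem_singleton]
            constructor
            · rintro rfl; exact haJ.1
            · intro hx
              rcases hJmem x hx with h | h
              · exact h
              · exact absurd (h ▸ hx) hlast
    have hbs : blowupSize K (pcover K P) = ∑ J ∈ T, f J := by
      rw [blowupSize]
      exact (Finset.sum_subset hTsub hzero).symm
    -- split the sum over T
    have hdisjT : Disjoint
        ((Finset.univ : Finset (Fin (p+1))).image (fun i => ({i} : Finset (Fin (p+1)))))
        ((Finset.univ : Finset (Fin p)).image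
          (fun i => ({i.castSucc, Fin.last p} : Finset (Fin (p+1))))) := by
      rw [Finset.disjoint_left]
      intro J h1 h2
      simp only [mem_image, mem_univ, true_and] at h1 h2
      obtain ⟨i, rfl⟩ := h1
      obtain ⟨j, hj⟩ := h2
      have hc1 : ({i} : Finset (Fin (p+1))).card = 1 := card_singleton i
      have hc2 : ({j.castSucc, Fin.last p} : Finset (Fin (p+1))).card = 2 :=
        card_pair (Fin.castSucc_lt_last j).ne
      rw [hj] at hc2
      omega
    have hinj1 : ∀ x ∈ (Finset.univ : Finset (Fin (p+1))), ∀ y ∈ Finset.univ,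
        ({x} : Finset (Fin (p+1))) = {y} → x = y := by
      intro x _ y _ h
      simpa using h
    have hinj2 : ∀ x ∈ (Finset.univ : Finset (Fin p)), ∀ y ∈ Finset.univ,
        ({x.castSucc, Fin.last p} : Finset (Fin (p+1))) = {y.castSucc, Fin.last p} → x = y := by
      intro x _ y _ h
      have : x.castSucc ∈ ({y.castSucc, Fin.last p} : Finset (Fin (p+1))) := by
        rw [← h]; simp
      rcases mem_insert.mp this with h' | h'
      · exact Fin.castSucc_injective p h'
      · exact absurd (mem_singleton.mp h') (Fin.castSucc_lt_last x).ne
    have hTeq : ∑ J ∈ T, f J =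
        (∑ i : Fin (p+1), f {i}) + ∑ i : Fin p, f {i.castSucc, Fin.last p} := by
      rw [hT, Finset.sum_union hdisjT, Finset.sum_image hinj1, Finset.sum_image hinj2]
    have hsplit : ∑ i : Fin (p+1), f {i} =
        (∑ i : Fin p, f {i.castSucc}) + f {Fin.last p} := by
      exact Fin.sum_univ_castSucc (fun i => f {i})
    -- the non-crossing simplices
    set N : Finset (Finset V) := K.filter (fun σ => ¬ Crosses P σ) with hN
    have hsumB : ∀ (A : Fin p → Finset (Finset V)), (∀ i, A i ⊆ N) →
        (∀ i j : Fin p, i ≠ j → Disjoint (A i) (A j)) → ∑ i, (A i).card ≤ N.card := by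
      intro A hAsub hAdis
      calc ∑ i, (A i).card = (Finset.univ.biUnion A).card :=
            (Finset.card_biUnion (fun i _ j _ h => hAdis i j h)).symm
        _ ≤ N.card := card_le_card (fun σ hσ => by
            rw [mem_biUnion] at hσ; obtain ⟨i, _, h⟩ := hσ; exact hAsub i h)
    -- the singleton-filter sets
    set B : Fin p → Finset (Finset V) :=
      fun i => K.filter (fun σ => ∀ j ∈ ({i.castSucc} : Finset (Fin (p+1))), σ ∈ pcover K P j)
      with hB
    set C : Fin p → Finset (Finset V) :=
      fun i => K.filter (fun σ => ∀ j ∈ ({i.castSucc, Fin.last p} : Finset (Fin (p+1))),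
        σ ∈ pcover K P j) with hC
    have hBmem : ∀ (i : Fin p) (σ : Finset V), σ ∈ B i ↔ σ ∈ K ∧ σ ⊆ P i := by
      intro i σ
      rw [hB, mem_filter]
      simp only [mem_singleton, forall_eq]
      constructor
      · rintro ⟨h1, h2⟩
        rw [mem_pcover_lt K P (show ((i.castSucc : Fin (p+1)) : ℕ) < p from i.isLt)] at h2
        refine ⟨h1, ?_⟩
        have : (⟨((i.castSucc : Fin (p+1)) : ℕ), i.isLt⟩ : Fin p) = i := Fin.ext rfl
        rw [this] at h2
        exact h2.2
      · rintro ⟨h1, h2⟩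
        refine ⟨h1, ?_⟩
        rw [mem_pcover_lt K P (show ((i.castSucc : Fin (p+1)) : ℕ) < p from i.isLt)]
        have : (⟨((i.castSucc : Fin (p+1)) : ℕ), i.isLt⟩ : Fin p) = i := Fin.ext rfl
        rw [this]
        exact ⟨h1, h2⟩
    have hBsubN : ∀ i, B i ⊆ N := by
      intro i σ hσ
      rw [hBmem] at hσ
      rw [hN, mem_filter]
      exact ⟨hσ.1, notCrosses_of_subset P hPdisj hσ.2⟩
    have hBdisj : ∀ i j : Fin p, i ≠ j → Disjoint (B i) (B j) := by
      intro i j hij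
      rw [Finset.disjoint_left]
      intro σ hi hj
      rw [hBmem] at hi hj
      obtain ⟨v, hv⟩ := (hK σ hi.1).1
      have := (hPdisj i j hij).le_bot (mem_inter.mpr ⟨hi.2 hv, hj.2 hv⟩)
      simp at this
    have hCsubB : ∀ i, C i ⊆ B i := by
      intro i σ hσ
      rw [hC, mem_filter] at hσ
      rw [hB, mem_filter]
      refine ⟨hσ.1, fun j hj => hσ.2 j ?_⟩
      simp only [mem_singleton] at hj
      simp [hj]
    have hsum1 : ∑ i : Fin p, f {i.castSucc} ≤ N.card := by
      have : ∀ i : Fin p, f {i.castSucc} = (B i).card := fun i => rfl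
      simp only [this]
      exact hsumB B hBsubN hBdisj
    have hsum2 : ∑ i : Fin p, f {i.castSucc, Fin.last p} ≤ N.card := by
      have : ∀ i : Fin p, f {i.castSucc, Fin.last p} = (C i).card := fun i => rfl
      simp only [this]
      exact hsumB C (fun i => (hCsubB i).trans (hBsubN i))
        (fun i j h => (hBdisj i j h).mono (hCsubB i) (hCsubB j))
    have hNle : N.card ≤ K.card := card_filter_le _ _
    have hKpos : 0 < K.card := card_pos.mpr hKne
    by_cases hS : (K.filter (fun σ => Crosses P σ)).Nonempty
    · have hScard : 0 < (K.filter (fun σ => Crosses P σ)).card := card_pos.mpr hS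
      have hNS : (K.filter (fun σ => Crosses P σ)).card + N.card = K.card := by
        rw [hN]
        exact Finset.card_filter_add_card_filter_not (p := fun σ => Crosses P σ)
      have hflast : f {Fin.last p} ≤ K.card := card_filter_le _ _
      rw [hbs, hTeq, hsplit]
      omega
    · have hSe : K.filter (fun σ => Crosses P σ) = ∅ := not_nonempty_iff_eq_empty.mp hS
      have hflast : f {Fin.last p} = 0 := by
        rw [hf, card_eq_zero, filter_eq_empty_iff]
        intro σ hσ hall
        have := hall (Fin.last p) (mem_singleton_self _)
        rw [mem_pcover_last] at this
        obtain ⟨ρ, ⟨hρK, hρc⟩, _, _⟩ := this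
        have : ρ ∈ K.filter (fun σ => Crosses P σ) := mem_filter.mpr ⟨hρK, hρc⟩
        rw [hSe] at this; simp at this
      rw [hbs, hTeq, hsplit, hflast]
      omega
end

section
/- Let K be a simplicial complex with a partition P of its vertex set into p parts, and let U = {U_0,...,U_p} be the associated partition-based cover (U_i for i < p is the set of simplices with all vertices in P_i, and U_p is the closure of the simplices meeting at least two parts). Then for all distinct i, j < p, U_i ∩ U_j = ∅, and the intersection of any three distinct sets of U is empty. Consequently the nerve N(U) is a subcomplex of a star graph: its edges are exactly the pairs {i, p} with U_i ∩ U_p nonempty. -/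
open Finset

theorem stmt_3 {V : Type*} [DecidableEq V] {p : ℕ}
    (K : Finset (Finset V)) (P : Fin p → Finset V)
    (hK : IsComplex K)
    (hPdisj : ∀ i j : Fin p, i ≠ j → Disjoint (P i) (P j))
    (hPcover : ∀ v : V, (∃ i, v ∈ P i) ↔ ∃ σ ∈ K, v ∈ σ) :
    -- the first `p` cover sets are pairwise disjoint
    (∀ i j : Fin (p + 1), i ≠ j → (i : ℕ) < p → (j : ℕ) < p →
      pcover K P i ∩ pcover K P j = ∅) ∧
    -- any triple intersection of distinct cover sets vanishes
    (∀ i j k : Fin (p + 1), i ≠ j → j ≠ k → i ≠ k →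
      pcover K P i ∩ pcover K P j ∩ pcover K P k = ∅) ∧
    -- the edges of the nerve are exactly the pairs `{i, p}` with nonempty overlap
    (∀ a b : Fin (p + 1), a ≠ b →
      ((pcover K P a ∩ pcover K P b).Nonempty ↔
        ∃ i : Fin p, ({a, b} : Finset (Fin (p + 1))) = {i.castSucc, Fin.last p} ∧
          (pcover K P i.castSucc ∩ pcover K P (Fin.last p)).Nonempty)) := by
  have hlast : ∀ x : Fin (p + 1), ¬ ((x : ℕ) < p) → x = Fin.last p := by
    intro x hx
    exact Fin.ext (le_antisymm (Nat.lt_succ_iff.mp x.isLt) (le_of_not_gt hx))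
  have disj : ∀ i j : Fin (p + 1), i ≠ j → (i : ℕ) < p → (j : ℕ) < p →
      pcover K P i ∩ pcover K P j = ∅ := by
    intro i j hij hi hj
    rw [Finset.eq_empty_iff_forall_notMem]
    intro σ hσ
    rw [Finset.mem_inter] at hσ
    obtain ⟨h1, h2⟩ := hσ
    simp only [pcover, dif_pos hi, dif_pos hj, Finset.mem_filter] at h1 h2
    have hne : σ.Nonempty := (hK σ h1.1).1
    have hd : Disjoint (P ⟨i, hi⟩) (P ⟨j, hj⟩) := by
      apply hPdisj
      intro h
      exact hij (Fin.ext (Fin.mk_eq_mk.mp h))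
    obtain ⟨v, hv⟩ := hne
    exact (Finset.disjoint_left.mp hd (h1.2 hv)) (h2.2 hv)
  refine ⟨disj, ?_, ?_⟩
  · intro i j k hij hjk hik
    by_cases hi : (i : ℕ) < p
    · by_cases hj : (j : ℕ) < p
      · refine Finset.subset_empty.mp ?_
        rw [← disj i j hij hi hj]
        exact Finset.inter_subset_left
      · have hk : (k : ℕ) < p := by
          by_contra hk
          exact hjk ((hlast j hj).trans (hlast k hk).symm)
        refine Finset.subset_empty.mp ?_
        rw [← disj i k hik hi hk]
        exact Finset.inter_subset_inter Finset.inter_subset_left subset_rfl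
    · have hj : (j : ℕ) < p := by
        by_contra hj
        exact hij ((hlast i hi).trans (hlast j hj).symm)
      have hk : (k : ℕ) < p := by
        by_contra hk
        exact hik ((hlast i hi).trans (hlast k hk).symm)
      refine Finset.subset_empty.mp ?_
      rw [← disj j k hjk hj hk]
      exact Finset.inter_subset_inter Finset.inter_subset_right subset_rfl
  · intro a b hab
    constructor
    · rintro hne
      by_cases ha : (a : ℕ) < p <;> by_cases hb : (b : ℕ) < p
      · rw [disj a b hab ha hb] at hne
        exact absurd hne (by simp)
      · refine ⟨⟨a, ha⟩, ?_, ?_⟩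
        · have : Fin.castSucc ⟨(a : ℕ), ha⟩ = a := Fin.ext rfl
          rw [this, hlast b hb]
        · have h1 : Fin.castSucc ⟨(a : ℕ), ha⟩ = a := Fin.ext rfl
          rwa [h1, ← hlast b hb]
      · refine ⟨⟨b, hb⟩, ?_, ?_⟩
        · have : Fin.castSucc ⟨(b : ℕ), hb⟩ = b := Fin.ext rfl
          rw [this, hlast a ha, Finset.pair_comm]
        · have h1 : Fin.castSucc ⟨(b : ℕ), hb⟩ = b := Fin.ext rfl
          rw [h1, ← hlast a ha, Finset.inter_comm]
          exact hne
      · exact absurd ((hlast a ha).trans (hlast b hb).symm) hab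
    · rintro ⟨i, hset, hne⟩
      have hicast : Fin.castSucc i ≠ Fin.last p := by
        intro h
        have := congrArg Fin.val h
        simp [Fin.castSucc] at this
        omega
      have hamem : a ∈ ({Fin.castSucc i, Fin.last p} : Finset (Fin (p + 1))) := by
        rw [← hset]; exact Finset.mem_insert_self a {b}
      have hbmem : b ∈ ({Fin.castSucc i, Fin.last p} : Finset (Fin (p + 1))) := by
        rw [← hset]; exact Finset.mem_insert_of_mem (Finset.mem_singleton_self b)
      simp only [Finset.mem_insert, Finset.mem_singleton] at hamem hbmem
      rcases hamem with ha | ha <;> rcases hbmem with hb | hb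
      · exact absurd (ha.trans hb.symm) hab
      · rw [ha, hb]; exact hne
      · rw [ha, hb, Finset.inter_comm]; exact hne
      · exact absurd (ha.trans hb.symm) hab
end
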